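/- If S ⊆ S' ⊆ sing_ω(κ), then E(T_{S'}) is Borel reducible to E(T_S). -/

import Mathlib

open Cardinal Set Order

/-- A node of the tree `2^{<κ}`: a binary sequence with domain `Iio dom`. -/
structure PNode (X : Type) [LinearOrder X] where
  dom : X
  val : X → Bool
  val_eq_false : ∀ b, ¬ b < dom → val b = false

variable {X : Type} [LinearOrder X]

/-- Restriction of a binary sequence to `Iio a`. -/
def res (f : X → Bool) (a : X) : X → Bool := fun b => if b < a then f b else false

/-- The node obtained by restricting `η` to `Iio a`. -/
def nodeRes (η : X → Bool) (a : X) : PNode X := ⟨a, res η a, fun _ hb => if_neg hb⟩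

/-- `q` end-extends `p`. -/
def PNode.Ext (q p : PNode X) : Prop := p.dom ≤ q.dom ∧ ∀ b < p.dom, q.val b = p.val b

/-- A subset of `2^{<κ}` is a tree if it is closed under restriction. -/
def DownClosed (T : Set (PNode X)) : Prop := ∀ p ∈ T, ∀ q, p.Ext q → q ∈ T

/-- The weak `S`-Kurepa tree determined by the predicate
`InL a s` = "`s ∈ L_{f(a)}`", where `f(a)` is the least limit ordinal `β` with
`L_β ⊨ a singular`. -/
def TS (S : Set X) (InL : X → (X → Bool) → Prop) : Set (PNode X) :=
  {p | ∀ a ≤ p.dom, a ∈ S → InL a (res p.val a)}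

/-- `η ∈ 2^κ` is a branch (of length `κ`) of `T`. -/
def IsBranch (T : Set (PNode X)) (η : X → Bool) : Prop := ∀ a : X, nodeRes η a ∈ T

/-- Basic open set determined by a node. -/
def Npset (p : PNode X) : Set (X → Bool) := {η | ∀ b < p.dom, η b = p.val b}

/-- κ-Borel subsets of `2^κ`. -/
inductive KBorel (X : Type) [LinearOrder X] : Set (X → Bool) → Prop
  | basic (p : PNode X) : KBorel X (Npset p)
  | compl {s : Set (X → Bool)} : KBorel X s → KBorel X sᶜ
  | iUnion {ι : Type} (hι : #ι ≤ #X) (f : ι → Set (X → Bool)) :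
      (∀ i, KBorel X (f i)) → KBorel X (⋃ i, f i)

/-- A Borel function on `2^κ`. -/
def IsKBorelFun (f : (X → Bool) → (X → Bool)) : Prop :=
  ∀ s, KBorel X s → KBorel X (f ⁻¹' s)

/-- Borel reducibility of binary relations on `2^κ`. -/
def BReducible (E F : (X → Bool) → (X → Bool) → Prop) : Prop :=
  ∃ f, IsKBorelFun f ∧ ∀ η ξ, E η ξ ↔ F (f η) (f ξ)

/-- κ-Borel subsets of `2^κ × 2^κ`. -/
inductive KBorel2 (X : Type) [LinearOrder X] : Set ((X → Bool) × (X → Bool)) → Prop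
  | basic (p q : PNode X) : KBorel2 X (Npset p ×ˢ Npset q)
  | compl {s} : KBorel2 X s → KBorel2 X sᶜ
  | iUnion {ι : Type} (hι : #ι ≤ #X) (f : ι → Set ((X → Bool) × (X → Bool))) :
      (∀ i, KBorel2 X (f i)) → KBorel2 X (⋃ i, f i)

/-- A Borel equivalence relation on `2^κ`. -/
def IsBorelER (E : (X → Bool) → (X → Bool) → Prop) : Prop :=
  Equivalence E ∧ KBorel2 X {z | E z.1 z.2}

/-- The equivalence relation `E(T)`: two sequences are equivalent iff they are equal
or neither is a branch of `T`. -/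
def ETrel (T : Set (PNode X)) (η ξ : X → Bool) : Prop :=
  η = ξ ∨ (¬ IsBranch T η ∧ ¬ IsBranch T ξ)

/-- A club (closed unbounded) subset of `κ` (represented by the type `X`). -/
def IsClubX (C : Set X) : Prop :=
  (∀ a : X, ∃ b ∈ C, a < b) ∧
    ∀ a : X, IsSuccLimit a → (∀ b < a, ∃ c ∈ C, b < c ∧ c < a) → a ∈ C

/-- A stationary subset of `κ`. -/
def IsStatX (S : Set X) : Prop := ∀ C, IsClubX C → (S ∩ C).Nonempty

/-- `g` is a continuous (strictly) increasing sequence of order type `c` (its domain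
being `Iio c`). -/
def IsContIncrOn (g : X → X) (c : X) : Prop :=
  StrictMonoOn g (Iio c) ∧ ∀ b < c, IsSuccLimit b → IsLUB (g '' Iio b) (g b)

/-- A fat subset of `κ`: together with any club it contains continuous increasing
sequences of every order type `< κ`. -/
def IsFatX (S : Set X) : Prop :=
  ∀ C, IsClubX C → ∀ c : X, ∃ g, IsContIncrOn g c ∧ ∀ b < c, g b ∈ S ∩ C

/-- `a` has cofinality `ω`: it is a limit with a countable cofinal subset. -/
def CofOmega (a : X) : Prop :=
  IsSuccLimit a ∧ ∃ g : ℕ → X, (∀ n, g n < a) ∧ ∀ b < a, ∃ n, b ≤ g n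

/-- `a` represents a cardinal: every proper initial segment has smaller cardinality. -/
def IsCardinalElt (a : X) : Prop := ∀ b < a, #(Iio b) < #(Iio a)

/-- `a` represents an `ω`-cofinal singular (uncountable) cardinal. -/
def IsSingOmegaCard (a : X) : Prop := IsCardinalElt a ∧ ℵ₀ < #(Iio a) ∧ CofOmega a

/-- The relation `E_0`: eventual agreement. -/
def E0rel (η ξ : X → Bool) : Prop := ∃ b : X, ∀ c, b ≤ c → η c = ξ c

/-- The relation `E_S` of [Kul]. -/
def ESrel (S : Set X) (η ξ : X → Bool) : Prop :=
  E0rel η ξ ∧ ∀ a ∈ S, ∃ b < a, ∀ c, b ≤ c → c < a → ((η c = ξ c) ↔ (η b = ξ b))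


section Aux

variable {X : Type} [LinearOrder X]

@[ext] lemma PNode.ext' {p q : PNode X} (h1 : p.dom = q.dom) (h2 : p.val = q.val) :
    p = q := by cases p; cases q; simp_all

lemma kborel_empty : KBorel X (∅ : Set (X → Bool)) := by
  have : (∅ : Set (X → Bool)) = ⋃ i : PEmpty, (fun _ => ∅ : PEmpty → Set (X → Bool)) i := by
    simp
  rw [this]
  exact KBorel.iUnion (by simp) _ (fun i => i.elim)

lemma kborel_univ : KBorel X (univ : Set (X → Bool)) := by
  have : (univ : Set (X → Bool)) = ∅ᶜ := by simp
  rw [this]; exact kborel_empty.compl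

lemma kborel_union (h2 : (2 : Cardinal) ≤ #X) {s t : Set (X → Bool)}
    (hs : KBorel X s) (ht : KBorel X t) : KBorel X (s ∪ t) := by
  have : s ∪ t = ⋃ i : Bool, (fun i => if i then s else t) i := by
    ext x; simp [Set.mem_iUnion, or_comm]
  rw [this]
  refine KBorel.iUnion ?_ _ (fun i => ?_)
  · rwa [Cardinal.mk_bool]
  · cases i <;> simp [hs, ht]

lemma kborel_inter (h2 : (2 : Cardinal) ≤ #X) {s t : Set (X → Bool)}
    (hs : KBorel X s) (ht : KBorel X t) : KBorel X (s ∩ t) := by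
  have : s ∩ t = (sᶜ ∪ tᶜ)ᶜ := by rw [Set.compl_union, compl_compl, compl_compl]
  rw [this]
  exact (kborel_union h2 hs.compl ht.compl).compl

/-- The set of sequences whose restriction at `a` lies in `T` is a union of basic sets. -/
lemma nodeRes_set_eq (T : Set (PNode X)) (a : X) :
    {η : X → Bool | nodeRes η a ∈ T} =
      ⋃ p : {p : PNode X // p.dom = a ∧ p ∈ T}, Npset p.1 := by
  ext η
  simp only [Set.mem_setOf_eq, Set.mem_iUnion]
  constructor
  · intro h
    exact ⟨⟨nodeRes η a, rfl, h⟩, fun b hb => (if_pos (show b < a from hb)).symm⟩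
  · rintro ⟨⟨p, hdom, hT⟩, hη⟩
    have : nodeRes η a = p := by
      refine PNode.ext' (by simp [nodeRes, hdom]) ?_
      funext b
      by_cases hb : b < a
      · simpa [nodeRes, res, hb, hdom] using (hη b (by rwa [hdom])).symm |>.symm
      · simp [nodeRes, res, hb, p.val_eq_false b (by rwa [hdom])]
    rw [this]; exact hT

lemma mk_pnode_le {κ : Cardinal} (hin : κ.IsInaccessible) (T : Set (PNode κ.ord.ToType))
    (a : κ.ord.ToType) :
    #{p : PNode κ.ord.ToType // p.dom = a ∧ p ∈ T} ≤ #κ.ord.ToType := by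
  have hinj : Function.Injective
      (fun p : {p : PNode κ.ord.ToType // p.dom = a ∧ p ∈ T} =>
        (fun b : Iio a => p.1.val b.1)) := by
    rintro ⟨p, hp, _⟩ ⟨q, hq, _⟩ h
    refine Subtype.ext (PNode.ext' (by rw [hp, hq]) ?_)
    funext b
    by_cases hb : b < a
    · exact congrFun h ⟨b, hb⟩
    · rw [p.val_eq_false b (by rwa [hp]), q.val_eq_false b (by rwa [hq])]
  have h1 : #{p : PNode κ.ord.ToType // p.dom = a ∧ p ∈ T} ≤ #(Iio a → Bool) :=
    Cardinal.mk_le_of_injective hinj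
  have h2 : #(Iio a → Bool) = (2 : Cardinal) ^ #(Iio a) := by
    rw [← Cardinal.mk_bool]; exact (Cardinal.power_def Bool (Iio a)).symm
  have h3 : (2 : Cardinal) ^ #(Iio a) < κ :=
    hin.isStrongPrelimit (Cardinal.mk_Iio_ord_toType a)
  rw [Cardinal.mk_ord_toType]
  exact h1.trans (le_of_lt (h2 ▸ h3))

lemma kborel_branch {κ : Cardinal} (hin : κ.IsInaccessible) (T : Set (PNode κ.ord.ToType)) :
    KBorel κ.ord.ToType {η | IsBranch T η} := by
  have heq : {η : κ.ord.ToType → Bool | IsBranch T η} =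
      (⋃ a : κ.ord.ToType, {η | nodeRes η a ∈ T}ᶜ)ᶜ := by
    ext η
    simp only [Set.mem_compl_iff, Set.mem_iUnion, Set.mem_setOf_eq, not_exists, not_not]
    rfl
  rw [heq]
  refine (KBorel.iUnion le_rfl _ (fun a => ?_)).compl
  refine KBorel.compl ?_
  rw [nodeRes_set_eq]
  exact KBorel.iUnion (mk_pnode_le hin T a) _ (fun p => KBorel.basic p.1)

end Aux

/-- V = L, κ inaccessible: if `S ⊆ S' ⊆ sing_ω(κ)` then
`E(T_{S'}) ≤_B E(T_S)`. -/
theorem statement11 (κ : Cardinal) (hin : κ.IsInaccessible)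
    (InL : κ.ord.ToType → (κ.ord.ToType → Bool) → Prop)
    (S S' : Set κ.ord.ToType) (hS' : ∀ a ∈ S', IsSingOmegaCard a) (hSS' : S ⊆ S') :
    BReducible (ETrel (TS S' InL)) (ETrel (TS S InL)) := by
  classical
  set T' : Set (PNode κ.ord.ToType) := TS S' InL with hT'
  set T : Set (PNode κ.ord.ToType) := TS S InL with hT
  have h2X : (2 : Cardinal) ≤ #κ.ord.ToType := by
    rw [Cardinal.mk_ord_toType]
    exact le_of_lt ((Cardinal.nat_lt_aleph0 2).trans_le (by exact_mod_cast hin.1.le))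
  have hsub : T' ⊆ T := fun p hp a ha haS => hp a ha (hSS' haS)
  have hbr : ∀ η, IsBranch T' η → IsBranch T η := fun η h a => hsub (h a)
  set ξ₀ : κ.ord.ToType → Bool :=
    if h : ∃ ζ, ¬ IsBranch T' ζ then h.choose else (fun _ => false) with hξ₀
  have hξ₀nb : (∃ ζ, ¬ IsBranch T' ζ) → ¬ IsBranch T' ξ₀ := by
    intro h; rw [hξ₀, dif_pos h]; exact h.choose_spec
  set f : (κ.ord.ToType → Bool) → (κ.ord.ToType → Bool) :=
    fun η => if IsBranch T' η then η else ξ₀ with hf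
  refine ⟨f, ?_, ?_⟩
  · intro s hs
    set B := {η : κ.ord.ToType → Bool | IsBranch T' η} with hB
    have hBb : KBorel κ.ord.ToType B := kborel_branch hin T'
    have heq : f ⁻¹' s = (B ∩ s) ∪ (Bᶜ ∩ (if ξ₀ ∈ s then univ else ∅)) := by
      ext η
      by_cases hη : IsBranch T' η
      · have hfη : f η = η := if_pos hη
        simp [Set.mem_preimage, hfη, hB, hη]
      · have hfη : f η = ξ₀ := if_neg hη
        by_cases hξs : ξ₀ ∈ s <;> simp [Set.mem_preimage, hfη, hB, hη, hξs]
    rw [heq]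
    refine kborel_union h2X (kborel_inter h2X hBb hs) (kborel_inter h2X hBb.compl ?_)
    by_cases hξs : ξ₀ ∈ s
    · rw [if_pos hξs]; exact kborel_univ
    · rw [if_neg hξs]; exact kborel_empty
  · intro η ξ
    by_cases hη : IsBranch T' η <;> by_cases hξ : IsBranch T' ξ
    · rw [show f η = η from if_pos hη, show f ξ = ξ from if_pos hξ]
      constructor
      · rintro (h | ⟨h, _⟩)
        · exact Or.inl h
        · exact absurd hη h
      · rintro (h | ⟨h, _⟩)
        · exact Or.inl h
        · exact absurd (hbr η hη) h
    · rw [show f η = η from if_pos hη, show f ξ = ξ₀ from if_neg hξ]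
      have hξ₀' : ¬ IsBranch T' ξ₀ := hξ₀nb ⟨ξ, hξ⟩
      constructor
      · rintro (rfl | ⟨h, _⟩)
        · exact absurd hη hξ
        · exact absurd hη h
      · rintro (h | ⟨h1, _⟩)
        · exact absurd (h ▸ hη) hξ₀'
        · exact absurd (hbr η hη) h1
    · rw [show f η = ξ₀ from if_neg hη, show f ξ = ξ from if_pos hξ]
      have hξ₀' : ¬ IsBranch T' ξ₀ := hξ₀nb ⟨η, hη⟩
      constructor
      · rintro (rfl | ⟨_, h⟩)
        · exact absurd hξ hη
        · exact absurd hξ h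
      · rintro (h | ⟨_, h2⟩)
        · rw [← h] at hξ; exact absurd hξ hξ₀'
        · exact absurd (hbr ξ hξ) h2
    · rw [show f η = ξ₀ from if_neg hη, show f ξ = ξ₀ from if_neg hξ]
      exact ⟨fun _ => Or.inl rfl, fun _ => Or.inr ⟨hη, hξ⟩⟩
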